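/- arXiv:2108.10040 — 2 statements merged into one kernel-verified Lean document; each statement's English description precedes it below -/
import Mathlib

section
/- Let G : Matrix (Fin 4) (Fin 4) ℝ be symmetric with det G < 0 (the contravariant metric g^{αβ}), let m : ℝ, and let φ, φ̄ : ℂ and p, p̄ : Fin 4 → ℂ (the scalar field, its conjugate field, and their derivatives ∂φ/∂x^α, ∂φ̄/∂x^α, all treated as independent variables). Define the Klein-Gordon Lagrangian density L̃(p̄, p, G) = ( (1/2) ∑_{α,β} (p̄ α · p β + p̄ β · p α) · (G α β : ℂ) − (m^2 : ℂ) · φ̄ · φ ) · ((−det G)^{−1/2} : ℂ). Then for all μ, ν ∈ Fin 4 the metric and canonical energy-momentum tensor densities coincide: ∑_{β} (∂L̃/∂G_{(ν,β)}) · (G μ β : ℂ) + ∑_{α} (∂L̃/∂G_{(α,ν)}) · (G α μ : ℂ) = p̄ ν · (∂L̃/∂p̄_μ) + (∂L̃/∂p_μ) · p ν − (if μ = ν then L̃(p̄, p, G) else 0), where ∂L̃/∂G_{(ν,β)} denotes the real Fréchet partial derivative in the matrix slot (a complex number) and ∂L̃/∂p_μ, ∂L̃/∂p̄_μ the complex Fréchet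 partial derivatives in the field-derivative slots. -/
set_option maxHeartbeats 1000000

attribute [local instance] Matrix.normedAddCommGroup Matrix.normedSpace

noncomputable section KGaux

/-- The determinant of a 4×4 real matrix as a continuous multilinear map in the rows. -/
def detCMM : ContinuousMultilinearMap ℝ (fun _ : Fin 4 => (Fin 4 → ℝ)) ℝ :=
  MultilinearMap.mkContinuous
    (Matrix.detRowAlternating : ((Fin 4) → ℝ) [⋀^(Fin 4)]→ₗ[ℝ] ℝ).toMultilinearMap
    24 (by
      intro mm
      rw [show (Matrix.detRowAlternating : ((Fin 4) → ℝ) [⋀^(Fin 4)]→ₗ[ℝ] ℝ).toMultilinearMap mm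
        = Matrix.det (Matrix.of mm) from rfl, Matrix.det_apply]
      refine (norm_sum_le _ _).trans ?_
      have h24 : ((Finset.univ : Finset (Equiv.Perm (Fin 4))).card : ℝ) = 24 := by
        simp [Fintype.card_perm]; norm_num [Nat.factorial]
      calc ∑ σ : Equiv.Perm (Fin 4), ‖(Equiv.Perm.sign σ : ℤ) • ∏ i, Matrix.of mm (σ i) i‖
          ≤ ∑ _σ : Equiv.Perm (Fin 4), ∏ i, ‖mm i‖ := by
            refine Finset.sum_le_sum fun σ _ => ?_
            rw [show ((Equiv.Perm.sign σ : ℤ) • ∏ i, Matrix.of mm (σ i) i)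
              = ((Equiv.Perm.sign σ : ℤ) : ℝ) * ∏ i, Matrix.of mm (σ i) i from
                zsmul_eq_mul _ _, norm_mul]
            calc ‖((Equiv.Perm.sign σ : ℤ) : ℝ)‖ * ‖∏ i, Matrix.of mm (σ i) i‖
                ≤ 1 * ‖∏ i, Matrix.of mm (σ i) i‖ := by
                  gcongr
                  rcases Int.units_eq_one_or (Equiv.Perm.sign σ) with h | h <;> simp [h]
              _ = ‖∏ i, Matrix.of mm (σ i) i‖ := one_mul _
              _ = ∏ i, ‖mm (σ i) i‖ := norm_prod _ _
              _ ≤ ∏ i, ‖mm (σ i)‖ := by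
                  refine Finset.prod_le_prod (fun _ _ => norm_nonneg _) fun i _ => ?_
                  exact norm_le_pi_norm (mm (σ i)) i
              _ = ∏ i, ‖mm i‖ := Equiv.prod_comp σ fun i => ‖mm i‖
        _ = 24 * ∏ i, ‖mm i‖ := by rw [Finset.sum_const, nsmul_eq_mul, h24]
      )

/-- The derivative of the determinant at `G`, as a continuous linear map on matrices. -/
def detDerivCLM (G : Matrix (Fin 4) (Fin 4) ℝ) :
    Matrix (Fin 4) (Fin 4) ℝ →L[ℝ] ℝ :=
  detCMM.linearDeriv (fun i => G i)

lemma hasFDerivAt_det (G : Matrix (Fin 4) (Fin 4) ℝ) :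
    HasFDerivAt (fun Gm : Matrix (Fin 4) (Fin 4) ℝ => Gm.det) (detDerivCLM G) G :=
  detCMM.hasFDerivAt (fun i => G i)

lemma stdBasisMatrix_row (ν β i : Fin 4) :
    (Matrix.single ν β (1 : ℝ)) i = if i = ν then Pi.single β 1 else 0 := by
  funext j
  simp only [Matrix.single, Matrix.of_apply]
  by_cases h : i = ν
  · subst h
    by_cases h' : j = β
    · subst h'; simp
    · simp [Pi.single_apply, h', Ne.symm h']
  · simp only [if_neg h]
    rw [if_neg (fun hc : ν = i ∧ β = j => h hc.1.symm)]
    rfl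

lemma detDerivCLM_std (G : Matrix (Fin 4) (Fin 4) ℝ) (ν β : Fin 4) :
    detDerivCLM G (Matrix.single ν β 1) = G.adjugate β ν := by
  have happ : detDerivCLM G (Matrix.single ν β 1)
      = ∑ i, (G.updateRow i ((Matrix.single ν β (1:ℝ)) i)).det := by
    show detCMM.linearDeriv (fun i => G i) (fun i => (Matrix.single ν β (1:ℝ)) i)
      = _
    rw [ContinuousMultilinearMap.linearDeriv_apply]
    exact Finset.sum_congr rfl fun i _ => rfl
  rw [happ, Finset.sum_eq_single ν]
  · rw [stdBasisMatrix_row, if_pos rfl, Matrix.adjugate_apply]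
  · intro i _ hi
    rw [stdBasisMatrix_row, if_neg hi]
    exact Matrix.det_eq_zero_of_row_eq_zero i (by simp)
  · intro h; exact absurd (Finset.mem_univ ν) h

/-- A continuous linear map extracting the `(a, b)` entry of a matrix. -/
def entryCLM (a b : Fin 4) : Matrix (Fin 4) (Fin 4) ℝ →L[ℝ] ℝ :=
  (ContinuousLinearMap.proj b).comp
    (ContinuousLinearMap.proj a : ((Fin 4) → (Fin 4) → ℝ) →L[ℝ] ((Fin 4) → ℝ))

lemma entryCLM_apply (a b : Fin 4) (M : Matrix (Fin 4) (Fin 4) ℝ) :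
    entryCLM a b M = M a b := rfl

lemma hasFDerivAt_entry (a b : Fin 4) (G : Matrix (Fin 4) (Fin 4) ℝ) :
    HasFDerivAt (fun Gm : Matrix (Fin 4) (Fin 4) ℝ => ((Gm a b : ℝ) : ℂ))
      (Complex.ofRealCLM.comp (entryCLM a b)) G :=
  (Complex.ofRealCLM.comp (entryCLM a b)).hasFDerivAt

lemma hasFDerivAt_KG (G : Matrix (Fin 4) (Fin 4) ℝ) (hdet : G.det < 0)
    (cc : Fin 4 → Fin 4 → ℂ) (C : ℂ) :
    HasFDerivAt
      (fun Gm : Matrix (Fin 4) (Fin 4) ℝ =>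
        ((1 / 2 : ℂ) * ∑ a, ∑ b, cc a b * (Gm a b : ℂ) - C)
          * (((-Gm.det) ^ (-(1 / 2) : ℝ) : ℝ) : ℂ))
      ((((1 / 2 : ℂ) * ∑ a, ∑ b, cc a b * (G a b : ℂ) - C) •
          (Complex.ofRealCLM.comp
            (((1 / 2 : ℝ) * (-G.det) ^ (-(1 / 2) - 1 : ℝ)) • detDerivCLM G)))
        + ((((-G.det) ^ (-(1 / 2) : ℝ) : ℝ) : ℂ) •
            ((1 / 2 : ℂ) • ∑ a, ∑ b, cc a b • (Complex.ofRealCLM.comp (entryCLM a b))))) G := by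
  have hx : (0:ℝ) < -G.det := by linarith
  have hlin : HasFDerivAt
      (fun Gm : Matrix (Fin 4) (Fin 4) ℝ => (1 / 2 : ℂ) * ∑ a, ∑ b, cc a b * (Gm a b : ℂ) - C)
      ((1 / 2 : ℂ) • ∑ a, ∑ b, cc a b • (Complex.ofRealCLM.comp (entryCLM a b))) G := by
    refine HasFDerivAt.sub_const C ?_
    refine HasFDerivAt.const_mul ?_ _
    refine HasFDerivAt.fun_sum fun a _ => HasFDerivAt.fun_sum fun b _ => ?_
    exact (hasFDerivAt_entry a b G).const_mul (cc a b)
  have hr : HasDerivAt (fun x : ℝ => (-x) ^ (-(1 / 2) : ℝ))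
      ((1 / 2 : ℝ) * (-G.det) ^ (-(1 / 2) - 1 : ℝ)) G.det := by
    have h1 : HasDerivAt (fun y : ℝ => y ^ (-(1 / 2) : ℝ))
        ((-(1 / 2) : ℝ) * (-G.det) ^ (-(1 / 2) - 1 : ℝ)) (-G.det) :=
      Real.hasDerivAt_rpow_const (Or.inl (ne_of_gt hx))
    have h2 : HasDerivAt (fun x : ℝ => -x) (-1) G.det := (hasDerivAt_id _).neg
    have := h1.comp G.det h2
    refine this.congr_deriv ?_
    ring
  have hg : HasFDerivAt (fun Gm : Matrix (Fin 4) (Fin 4) ℝ => (-Gm.det) ^ (-(1 / 2) : ℝ))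
      (((1 / 2 : ℝ) * (-G.det) ^ (-(1 / 2) - 1 : ℝ)) • detDerivCLM G) G :=
    hr.comp_hasFDerivAt G (hasFDerivAt_det G)
  have hgc : HasFDerivAt
      (fun Gm : Matrix (Fin 4) (Fin 4) ℝ => (((-Gm.det) ^ (-(1 / 2) : ℝ) : ℝ) : ℂ))
      (Complex.ofRealCLM.comp
        (((1 / 2 : ℝ) * (-G.det) ^ (-(1 / 2) - 1 : ℝ)) • detDerivCLM G)) G :=
    Complex.ofRealCLM.hasFDerivAt.comp G hg
  exact hlin.mul hgc

lemma KG_sum_collapse (f : Fin 4 → Fin 4 → ℂ) (i j : Fin 4) :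
    ∑ a, ∑ b, f a b * (if i = a ∧ j = b then (1:ℂ) else 0) = f i j := by
  rw [Finset.sum_eq_single i]
  · rw [Finset.sum_eq_single j]
    · simp
    · intro b _ hb
      rw [if_neg (fun hc : i = i ∧ j = b => hb hc.2.symm), mul_zero]
    · intro h; exact absurd (Finset.mem_univ j) h
  · intro a _ ha
    refine Finset.sum_eq_zero fun b _ => ?_
    rw [if_neg (fun hc : i = a ∧ j = b => ha hc.1.symm), mul_zero]
  · intro h; exact absurd (Finset.mem_univ i) h

/-- Evaluation of the metric derivative of the KG Lagrangian density. -/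
lemma KG_evalG (G : Matrix (Fin 4) (Fin 4) ℝ) (hdet : G.det < 0)
    (m : ℝ) (φ φbar : ℂ) (p pbar : Fin 4 → ℂ) (ν' β' : Fin 4) :
    fderiv ℝ (fun Gm : Matrix (Fin 4) (Fin 4) ℝ =>
        ((1 / 2) * ∑ α, ∑ β, (pbar α * p β + pbar β * p α) * (Gm α β : ℂ)
          - (m ^ 2 : ℂ) * φbar * φ) * (((-Gm.det) ^ (-(1 / 2) : ℝ) : ℝ) : ℂ))
        G (Matrix.single ν' β' 1)
      = (1 / 2 : ℂ) * (pbar ν' * p β' + pbar β' * p ν')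
          * (((-G.det) ^ (-(1 / 2) : ℝ) : ℝ) : ℂ)
        + ((1 / 2 : ℂ) * ∑ a, ∑ b, (pbar a * p b + pbar b * p a) * (G a b : ℂ)
            - (m ^ 2 : ℂ) * φbar * φ)
          * (((1 / 2 : ℝ) * (-G.det) ^ (-(1 / 2) - 1 : ℝ) : ℝ) : ℂ)
          * (G.adjugate β' ν' : ℂ) := by
  have h := hasFDerivAt_KG G hdet (fun a b => pbar a * p b + pbar b * p a)
    ((m ^ 2 : ℂ) * φbar * φ)
  rw [h.fderiv]
  simp only [ContinuousLinearMap.add_apply, ContinuousLinearMap.smul_apply,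
    ContinuousLinearMap.comp_apply, ContinuousLinearMap.sum_apply,
    Complex.ofRealCLM_apply, entryCLM_apply, detDerivCLM_std, smul_eq_mul]
  have hcollapse : ∑ a, ∑ b, (pbar a * p b + pbar b * p a)
      * (((Matrix.single ν' β' (1:ℝ)) a b : ℝ) : ℂ)
      = pbar ν' * p β' + pbar β' * p ν' := by
    have he : ∀ a b : Fin 4, (((Matrix.single ν' β' (1:ℝ)) a b : ℝ) : ℂ)
        = (if ν' = a ∧ β' = b then (1:ℂ) else 0) := by
      intro a b
      by_cases h1 : ν' = a <;> by_cases h2 : β' = b <;>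
        simp [Matrix.single, h1, h2]
    rw [Finset.sum_congr rfl fun a _ => Finset.sum_congr rfl fun b _ => by rw [he a b]]
    exact KG_sum_collapse _ ν' β'
  rw [hcollapse]
  push_cast
  ring

/-- Evaluation of the derivative of the KG Lagrangian density in the conjugate field slot. -/
lemma KG_evalP1 (G : Matrix (Fin 4) (Fin 4) ℝ) (hsym : ∀ a b, G a b = G b a)
    (m : ℝ) (φ φbar : ℂ) (p pbar : Fin 4 → ℂ) (μ : Fin 4) :
    fderiv ℂ (fun pb : Fin 4 → ℂ =>
        ((1 / 2) * ∑ α, ∑ β, (pb α * p β + pb β * p α) * (G α β : ℂ)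
          - (m ^ 2 : ℂ) * φbar * φ) * (((-G.det) ^ (-(1 / 2) : ℝ) : ℝ) : ℂ))
        pbar (Pi.single μ 1)
      = (∑ b, p b * (G μ b : ℂ)) * (((-G.det) ^ (-(1 / 2) : ℝ) : ℝ) : ℂ) := by
  set T : (Fin 4 → ℂ) →L[ℂ] ℂ :=
    (((-G.det) ^ (-(1 / 2) : ℝ) : ℝ) : ℂ) • ((1 / 2 : ℂ) •
      ∑ a, ∑ b, ((G a b : ℂ)) •
        (p b • (ContinuousLinearMap.proj a : (Fin 4 → ℂ) →L[ℂ] ℂ)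
          + p a • (ContinuousLinearMap.proj b : (Fin 4 → ℂ) →L[ℂ] ℂ))) with hT
  have hTapp : ∀ pb : Fin 4 → ℂ, T pb
      = (((-G.det) ^ (-(1 / 2) : ℝ) : ℝ) : ℂ) * ((1 / 2 : ℂ) *
        ∑ a, ∑ b, ((G a b : ℂ)) * (p b * pb a + p a * pb b)) := by
    intro pb
    rw [hT]
    simp only [ContinuousLinearMap.smul_apply, ContinuousLinearMap.add_apply,
      ContinuousLinearMap.sum_apply, ContinuousLinearMap.proj_apply, smul_eq_mul]
  have h : HasFDerivAt (fun pb : Fin 4 → ℂ =>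
      ((1 / 2 : ℂ) * ∑ α, ∑ β, (pb α * p β + pb β * p α) * (G α β : ℂ)
        - (m ^ 2 : ℂ) * φbar * φ) * (((-G.det) ^ (-(1 / 2) : ℝ) : ℝ) : ℂ)) T pbar := by
    have heq : (fun pb : Fin 4 → ℂ =>
        ((1 / 2 : ℂ) * ∑ α, ∑ β, (pb α * p β + pb β * p α) * (G α β : ℂ)
          - (m ^ 2 : ℂ) * φbar * φ) * (((-G.det) ^ (-(1 / 2) : ℝ) : ℝ) : ℂ))
        = fun pb => T pb
          - ((m ^ 2 : ℂ) * φbar * φ * (((-G.det) ^ (-(1 / 2) : ℝ) : ℝ) : ℂ)) := by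
      funext pb
      rw [hTapp pb,
        Finset.sum_congr rfl fun a (_ : a ∈ Finset.univ) =>
          Finset.sum_congr rfl fun b (_ : b ∈ Finset.univ) =>
          (show (pb a * p b + pb b * p a) * (G a b : ℂ)
            = (G a b : ℂ) * (p b * pb a + p a * pb b) by ring)]
      ring
    rw [heq]
    exact T.hasFDerivAt.sub_const _
  rw [h.fderiv, hTapp]
  simp only [Pi.single_apply]
  have hst : ∀ a : Fin 4, ∑ b, (G a b : ℂ)
      * (p b * (if a = μ then 1 else 0) + p a * (if b = μ then 1 else 0))
      = (if a = μ then (∑ b, p b * (G a b : ℂ)) else 0) + p a * (G a μ : ℂ) := by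
    intro a
    have h1 : ∀ b : Fin 4, (G a b : ℂ)
        * (p b * (if a = μ then 1 else 0) + p a * (if b = μ then 1 else 0))
        = (if a = μ then p b * (G a b : ℂ) else 0)
          + (if b = μ then p a * (G a b : ℂ) else 0) := by
      intro b
      by_cases ha : a = μ <;> by_cases hb : b = μ <;> simp [ha, hb] <;> ring
    simp only [h1]
    rw [Finset.sum_add_distrib,
      Finset.sum_ite_eq' Finset.univ μ (fun b => p a * (G a b : ℂ))]
    by_cases ha : a = μ <;> simp [ha]
  simp only [hst]
  rw [Finset.sum_add_distrib,
    Finset.sum_ite_eq' Finset.univ μ (fun a => ∑ b, p b * (G a b : ℂ))]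
  have hg1 : ∑ a, p a * (G a μ : ℂ) = ∑ a, p a * (G μ a : ℂ) :=
    Finset.sum_congr rfl fun a _ => by rw [hsym a μ]
  rw [hg1]
  simp only [Finset.mem_univ, if_pos]
  ring

/-- Evaluation of the derivative of the KG Lagrangian density in the field slot. -/
lemma KG_evalP2 (G : Matrix (Fin 4) (Fin 4) ℝ) (hsym : ∀ a b, G a b = G b a)
    (m : ℝ) (φ φbar : ℂ) (p pbar : Fin 4 → ℂ) (μ : Fin 4) :
    fderiv ℂ (fun pp : Fin 4 → ℂ =>
        ((1 / 2) * ∑ α, ∑ β, (pbar α * pp β + pbar β * pp α) * (G α β : ℂ)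
          - (m ^ 2 : ℂ) * φbar * φ) * (((-G.det) ^ (-(1 / 2) : ℝ) : ℝ) : ℂ))
        p (Pi.single μ 1)
      = (∑ b, pbar b * (G μ b : ℂ)) * (((-G.det) ^ (-(1 / 2) : ℝ) : ℝ) : ℂ) := by
  set T : (Fin 4 → ℂ) →L[ℂ] ℂ :=
    (((-G.det) ^ (-(1 / 2) : ℝ) : ℝ) : ℂ) • ((1 / 2 : ℂ) •
      ∑ a, ∑ b, ((G a b : ℂ)) •
        (pbar a • (ContinuousLinearMap.proj b : (Fin 4 → ℂ) →L[ℂ] ℂ)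
          + pbar b • (ContinuousLinearMap.proj a : (Fin 4 → ℂ) →L[ℂ] ℂ))) with hT
  have hTapp : ∀ pp : Fin 4 → ℂ, T pp
      = (((-G.det) ^ (-(1 / 2) : ℝ) : ℝ) : ℂ) * ((1 / 2 : ℂ) *
        ∑ a, ∑ b, ((G a b : ℂ)) * (pbar a * pp b + pbar b * pp a)) := by
    intro pp
    rw [hT]
    simp only [ContinuousLinearMap.smul_apply, ContinuousLinearMap.add_apply,
      ContinuousLinearMap.sum_apply, ContinuousLinearMap.proj_apply, smul_eq_mul]
  have h : HasFDerivAt (fun pp : Fin 4 → ℂ =>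
      ((1 / 2 : ℂ) * ∑ α, ∑ β, (pbar α * pp β + pbar β * pp α) * (G α β : ℂ)
        - (m ^ 2 : ℂ) * φbar * φ) * (((-G.det) ^ (-(1 / 2) : ℝ) : ℝ) : ℂ)) T p := by
    have heq : (fun pp : Fin 4 → ℂ =>
        ((1 / 2 : ℂ) * ∑ α, ∑ β, (pbar α * pp β + pbar β * pp α) * (G α β : ℂ)
          - (m ^ 2 : ℂ) * φbar * φ) * (((-G.det) ^ (-(1 / 2) : ℝ) : ℝ) : ℂ))
        = fun pp => T pp
          - ((m ^ 2 : ℂ) * φbar * φ * (((-G.det) ^ (-(1 / 2) : ℝ) : ℝ) : ℂ)) := by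
      funext pp
      rw [hTapp pp,
        Finset.sum_congr rfl fun a (_ : a ∈ Finset.univ) =>
          Finset.sum_congr rfl fun b (_ : b ∈ Finset.univ) =>
          (show (pbar a * pp b + pbar b * pp a) * (G a b : ℂ)
            = (G a b : ℂ) * (pbar a * pp b + pbar b * pp a) by ring)]
      ring
    rw [heq]
    exact T.hasFDerivAt.sub_const _
  rw [h.fderiv, hTapp]
  simp only [Pi.single_apply]
  have hst : ∀ a : Fin 4, ∑ b, (G a b : ℂ)
      * (pbar a * (if b = μ then 1 else 0) + pbar b * (if a = μ then 1 else 0))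
      = (if a = μ then (∑ b, pbar b * (G a b : ℂ)) else 0) + pbar a * (G a μ : ℂ) := by
    intro a
    have h1 : ∀ b : Fin 4, (G a b : ℂ)
        * (pbar a * (if b = μ then 1 else 0) + pbar b * (if a = μ then 1 else 0))
        = (if a = μ then pbar b * (G a b : ℂ) else 0)
          + (if b = μ then pbar a * (G a b : ℂ) else 0) := by
      intro b
      by_cases ha : a = μ <;> by_cases hb : b = μ <;> simp [ha, hb] <;> ring
    simp only [h1]
    rw [Finset.sum_add_distrib,
      Finset.sum_ite_eq' Finset.univ μ (fun b => pbar a * (G a b : ℂ))]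
    by_cases ha : a = μ <;> simp [ha]
  simp only [hst]
  rw [Finset.sum_add_distrib,
    Finset.sum_ite_eq' Finset.univ μ (fun a => ∑ b, pbar b * (G a b : ℂ))]
  have hg1 : ∑ a, pbar a * (G a μ : ℂ) = ∑ a, pbar a * (G μ a : ℂ) :=
    Finset.sum_congr rfl fun a _ => by rw [hsym a μ]
  rw [hg1]
  simp only [Finset.mem_univ, if_pos]
  ring

end KGaux

/-- for the Klein-Gordon Lagrangian density of a massive complex scalar
field, the metric and canonical energy-momentum tensor densities coincide (Eq. (12)). -/
theorem kleinGordon_emt_identity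
    (G : Matrix (Fin 4) (Fin 4) ℝ) (hG : G.IsSymm) (hdet : G.det < 0)
    (m : ℝ) (φ φbar : ℂ) (p pbar : Fin 4 → ℂ)
    (L : (Fin 4 → ℂ) → (Fin 4 → ℂ) → Matrix (Fin 4) (Fin 4) ℝ → ℂ)
    (hL : L = fun pb pp Gm =>
      ((1 / 2) * ∑ α, ∑ β, (pb α * pp β + pb β * pp α) * (Gm α β : ℂ)
        - (m ^ 2 : ℂ) * φbar * φ) * (((-Gm.det) ^ (-(1 / 2) : ℝ) : ℝ) : ℂ)) :
    ∀ μ ν : Fin 4,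
      (∑ β, fderiv ℝ (fun Gm => L pbar p Gm) G (Matrix.single ν β 1) * (G μ β : ℂ))
      + (∑ α, fderiv ℝ (fun Gm => L pbar p Gm) G (Matrix.single α ν 1) * (G α μ : ℂ))
      = pbar ν * fderiv ℂ (fun pb => L pb p G) pbar (Pi.single μ 1)
        + fderiv ℂ (fun pp => L pbar pp G) p (Pi.single μ 1) * p ν
        - (if μ = ν then L pbar p G else 0) := by
  intro μ ν
  subst hL
  beta_reduce
  have hsym : ∀ a b, G a b = G b a := fun a b => hG.apply b a
  rw [KG_evalP1 G hsym m φ φbar p pbar μ, KG_evalP2 G hsym m φ φbar p pbar μ]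
  simp only [KG_evalG G hdet m φ φbar p pbar]
  set K : ℂ := (((-G.det) ^ (-(1 / 2) : ℝ) : ℝ) : ℂ) with hK
  set W : ℂ := (((1 / 2 : ℝ) * (-G.det) ^ (-(1 / 2) - 1 : ℝ) : ℝ) : ℂ) with hW
  set S : ℂ := ((1 / 2 : ℂ) * ∑ a, ∑ b, (pbar a * p b + pbar b * p a) * (G a b : ℂ)
    - (m ^ 2 : ℂ) * φbar * φ) with hS
  set s1 : ℂ := ∑ b, p b * (G μ b : ℂ) with hs1
  set s2 : ℂ := ∑ b, pbar b * (G μ b : ℂ) with hs2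
  -- adjugate sums
  have hadj1 : ∑ β, (G.adjugate β ν : ℂ) * (G μ β : ℂ)
      = (G.det : ℂ) * (if μ = ν then 1 else 0) := by
    have hr : ∑ β, G μ β * G.adjugate β ν = G.det * (if μ = ν then 1 else 0) := by
      have h2 := congrFun (congrFun (Matrix.mul_adjugate G) μ) ν
      simpa [Matrix.mul_apply, Matrix.one_apply] using h2
    calc ∑ β, (G.adjugate β ν : ℂ) * (G μ β : ℂ)
        = ((∑ β, G μ β * G.adjugate β ν : ℝ) : ℂ) := by
          push_cast
          exact Finset.sum_congr rfl fun β _ => by ring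
      _ = (G.det : ℂ) * (if μ = ν then 1 else 0) := by
          rw [hr]; by_cases hμν : μ = ν <;> simp [hμν]
  have hadj2 : ∑ α, (G.adjugate ν α : ℂ) * (G α μ : ℂ)
      = (G.det : ℂ) * (if μ = ν then 1 else 0) := by
    have hr : ∑ α, G.adjugate ν α * G α μ = G.det * (if μ = ν then 1 else 0) := by
      have h2 := congrFun (congrFun (Matrix.adjugate_mul G) ν) μ
      rw [Matrix.mul_apply] at h2
      rw [Matrix.smul_apply, Matrix.one_apply, smul_eq_mul] at h2
      rw [h2]
      by_cases hμν : μ = ν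
      · subst hμν; simp
      · rw [if_neg (fun h : ν = μ => hμν h.symm), if_neg hμν]
    calc ∑ α, (G.adjugate ν α : ℂ) * (G α μ : ℂ)
        = ((∑ α, G.adjugate ν α * G α μ : ℝ) : ℂ) := by
          push_cast
          exact Finset.sum_congr rfl fun α _ => by ring
      _ = (G.det : ℂ) * (if μ = ν then 1 else 0) := by
          rw [hr]; by_cases hμν : μ = ν <;> simp [hμν]
  -- the two sums on the left
  have hsum1 : ∑ β, ((1 / 2 : ℂ) * (pbar ν * p β + pbar β * p ν) * K
        + S * W * (G.adjugate β ν : ℂ)) * (G μ β : ℂ)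
      = (1 / 2 : ℂ) * (pbar ν * s1 + s2 * p ν) * K
        + S * W * ((G.det : ℂ) * (if μ = ν then 1 else 0)) := by
    have expand : ∀ β : Fin 4, ((1 / 2 : ℂ) * (pbar ν * p β + pbar β * p ν) * K
          + S * W * (G.adjugate β ν : ℂ)) * (G μ β : ℂ)
        = (1 / 2 : ℂ) * K * pbar ν * (p β * (G μ β : ℂ))
          + (1 / 2 : ℂ) * K * p ν * (pbar β * (G μ β : ℂ))
          + S * W * ((G.adjugate β ν : ℂ) * (G μ β : ℂ)) := fun β => by ring
    simp only [expand]
    rw [Finset.sum_add_distrib, Finset.sum_add_distrib, ← Finset.mul_sum,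
      ← Finset.mul_sum, ← Finset.mul_sum, hadj1, ← hs1, ← hs2]
    ring
  have hg1 : ∑ α, p α * (G α μ : ℂ) = s1 := by
    rw [hs1]; exact Finset.sum_congr rfl fun a _ => by rw [hsym a μ]
  have hg2 : ∑ α, pbar α * (G α μ : ℂ) = s2 := by
    rw [hs2]; exact Finset.sum_congr rfl fun a _ => by rw [hsym a μ]
  have hsum2 : ∑ α, ((1 / 2 : ℂ) * (pbar α * p ν + pbar ν * p α) * K
        + S * W * (G.adjugate ν α : ℂ)) * (G α μ : ℂ)
      = (1 / 2 : ℂ) * (pbar ν * s1 + s2 * p ν) * K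
        + S * W * ((G.det : ℂ) * (if μ = ν then 1 else 0)) := by
    have expand : ∀ α : Fin 4, ((1 / 2 : ℂ) * (pbar α * p ν + pbar ν * p α) * K
          + S * W * (G.adjugate ν α : ℂ)) * (G α μ : ℂ)
        = (1 / 2 : ℂ) * K * p ν * (pbar α * (G α μ : ℂ))
          + (1 / 2 : ℂ) * K * pbar ν * (p α * (G α μ : ℂ))
          + S * W * ((G.adjugate ν α : ℂ) * (G α μ : ℂ)) := fun α => by ring
    simp only [expand]
    rw [Finset.sum_add_distrib, Finset.sum_add_distrib, ← Finset.mul_sum,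
      ← Finset.mul_sum, ← Finset.mul_sum, hadj2, hg1, hg2]
    ring
  rw [hsum1, hsum2]
  -- the key rpow identity
  have hxpos : (0:ℝ) < -G.det := by linarith
  have hkeyR : (1 / 2 : ℝ) * (-G.det) ^ (-(1 / 2) - 1 : ℝ) * (2 * G.det)
      = -((-G.det) ^ (-(1 / 2) : ℝ)) := by
    have h1 := Real.rpow_add_one (ne_of_gt hxpos) (-(1 / 2) - 1 : ℝ)
    have h2 : (-(1 / 2) - 1 + 1 : ℝ) = (-(1 / 2) : ℝ) := by ring
    rw [h2] at h1
    nlinarith [h1]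
  have hkeyC : W * (2 * (G.det : ℂ)) = -K := by
    rw [hW, hK]
    exact_mod_cast congrArg (Complex.ofReal) hkeyR
  by_cases hμν : μ = ν
  · subst hμν
    simp only [eq_self_iff_true, if_true]
    linear_combination S * hkeyC
  · simp only [if_neg hμν]
    ring
end

section
/- Let Riem : Fin 4 → Fin 4 → Fin 4 → Fin 4 → ℝ and let G : Matrix (Fin 4) (Fin 4) ℝ be symmetric with det G < 0. With Ric ξ λ = ∑_{η} Riem η ξ η λ, √ = (−det G)^{−1/2} and R̃(Riem, G) = (∑_{ξ,λ} Ric ξ λ · G ξ λ) · √, define the metric energy-momentum tensor density T̃^μ_ν = ∑_{β} (∂R̃/∂G_{(ν,β)}) · G μ β + ∑_{β} (∂R̃/∂G_{(β,ν)}) · G β μ and the canonical one θ̃^μ_ν = ∑_{η,ξ,λ} (∂R̃/∂Riem_{(η,ξ,μ,λ)}) · Riem η ξ ν λ + ∑_{η,ξ,β} (∂R̃/∂Riem_{(η,ξ,β,μ)}) · Riem η ξ β ν − (if μ = ν then R̃(Riem,G) else 0). Then for all μ, ν ∈ Fin 4: T̃^μ_ν = θ̃^μ_ν + (∑_{β}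 Ric ν β · G μ β − ∑_{ξ,λ} Riem μ ξ ν λ · G ξ λ) · √; i.e. the metric and canonical energy-momentum tensors of the Einstein-Hilbert-Cartan Lagrangian differ exactly by R̃_ν^μ − R̃^μ_ν, and they agree whenever these two Ricci contractions coincide (in particular for a symmetric Ricci tensor, i.e. torsion-free space-time). -/
attribute [local instance] Matrix.normedAddCommGroup Matrix.normedSpace

private lemma fderiv_dir {E : Type*} [NormedAddCommGroup E] [NormedSpace ℝ E]
    (f : E → ℝ) (p v : E) (c : ℝ) (hf : DifferentiableAt ℝ f p)
    (h : HasDerivAt (fun t : ℝ => f (p + t • v)) c 0) : fderiv ℝ f p v = c := by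
  have hline : HasDerivAt (fun t : ℝ => p + t • v) v 0 := by
    simpa using ((hasDerivAt_id (0 : ℝ)).smul_const v).const_add p
  have hf' : HasFDerivAt f (fderiv ℝ f p) ((fun t : ℝ => p + t • v) 0) := by
    simpa using hf.hasFDerivAt
  exact (h.unique (hf'.comp_hasDerivAt 0 hline)).symm

private lemma det_add_smul_std (G : Matrix (Fin 4) (Fin 4) ℝ) (i j : Fin 4) (t : ℝ) :
    (G + t • Matrix.single i j 1).det = G.det + t * G.adjugate j i := by
  have h : G + t • Matrix.single i j 1
      = G.updateRow i (G i + t • (Pi.single j 1 : Fin 4 → ℝ)) := by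
    ext a b
    by_cases ha : a = i
    · subst ha
      simp [Matrix.single, Pi.single_apply, eq_comm]
    · simp [Matrix.updateRow_ne ha, Matrix.single, Ne.symm ha]
  rw [h, Matrix.det_updateRow_add, Matrix.updateRow_eq_self, Matrix.det_updateRow_smul,
    ← Matrix.adjugate_apply]

private lemma csum (η κ ξ l : Fin 4) (g : Fin 4 → Fin 4 → ℝ) :
    (∑ x : Fin 4, ∑ y : Fin 4,
        (∑ z : Fin 4, (if z = η ∧ x = ξ ∧ z = κ ∧ y = l then (1:ℝ) else 0)) * g x y)
      = if η = κ then g ξ l else 0 := by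
  by_cases h : η = κ
  · subst h
    have h2 : ∀ z x y : Fin 4,
        (if z = η ∧ x = ξ ∧ z = η ∧ y = l then (1:ℝ) else 0)
          = (if z = η then (1:ℝ) else 0) * ((if x = ξ then (1:ℝ) else 0) * (if y = l then 1 else 0)) := by
      intro z x y
      by_cases h1 : z = η <;> by_cases h2 : x = ξ <;> by_cases h3 : y = l <;> simp [*]
    simp [h2, ite_mul, mul_ite, Finset.sum_ite_eq']
  · have h2 : ∀ z x y : Fin 4,
        (if z = η ∧ x = ξ ∧ z = κ ∧ y = l then (1:ℝ) else 0) = 0 := by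
      intro z x y
      rw [if_neg]
      rintro ⟨rfl, -, rfl, -⟩
      exact h rfl
    simp [h2, if_neg h]

/-- the metric and canonical energy-momentum tensor densities of the
Einstein-Hilbert-Cartan Lagrangian differ exactly by `R̃_ν^μ − R̃^μ_ν`
(Eqs. (19)–(20) with `16πG = 1`). -/
theorem ehc_emt_relation
    (Riem : Fin 4 → Fin 4 → Fin 4 → Fin 4 → ℝ)
    (G : Matrix (Fin 4) (Fin 4) ℝ) (hG : G.IsSymm) (hdet : G.det < 0)
    (Ric : Fin 4 → Fin 4 → ℝ) (hRic : Ric = fun ξ l => ∑ η, Riem η ξ η l)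
    (Rt : (Fin 4 → Fin 4 → Fin 4 → Fin 4 → ℝ) × Matrix (Fin 4) (Fin 4) ℝ → ℝ)
    (hRt : Rt = fun x =>
      (∑ ξ, ∑ l, (∑ η, x.1 η ξ η l) * x.2 ξ l) * (-x.2.det) ^ (-(1 / 2) : ℝ))
    (Tmet θcan : Fin 4 → Fin 4 → ℝ)
    (hT : Tmet = fun μ ν =>
      (∑ β, fderiv ℝ Rt (Riem, G) (0, Matrix.single ν β 1) * G μ β)
      + (∑ β, fderiv ℝ Rt (Riem, G) (0, Matrix.single β ν 1) * G β μ))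
    (hθ : θcan = fun μ ν =>
      (∑ η, ∑ ξ, ∑ l, fderiv ℝ Rt (Riem, G)
          ((fun a b c d => if a = η ∧ b = ξ ∧ c = μ ∧ d = l then 1 else 0), 0)
          * Riem η ξ ν l)
      + (∑ η, ∑ ξ, ∑ β, fderiv ℝ Rt (Riem, G)
          ((fun a b c d => if a = η ∧ b = ξ ∧ c = β ∧ d = μ then 1 else 0), 0)
          * Riem η ξ β ν)
      - (if μ = ν then Rt (Riem, G) else 0)) :
    ∀ μ ν : Fin 4,
      Tmet μ ν = θcan μ ν
        + ((∑ β, Ric ν β * G μ β) - (∑ ξ, ∑ l, Riem μ ξ ν l * G ξ l))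
          * (-G.det) ^ (-(1 / 2) : ℝ) := by
  subst hRic hT hθ
  intro μ ν
  have hd : (0:ℝ) < -G.det := by linarith
  have hdne : -G.det ≠ 0 := ne_of_gt hd
  set sq : ℝ := (-G.det) ^ (-(1/2) : ℝ) with hsq
  set sq3 : ℝ := (-G.det) ^ ((-(1/2) : ℝ) - 1) with hsq3
  set S0 : ℝ := ∑ ξ, ∑ l, (∑ η, Riem η ξ η l) * G ξ l with hS0
  -- differentiability of Rt at (Riem, G)
  have hdiff : DifferentiableAt ℝ Rt (Riem, G) := by
    rw [hRt]
    have h1 : Differentiable ℝ (fun x : (Fin 4 → Fin 4 → Fin 4 → Fin 4 → ℝ) × Matrix (Fin 4) (Fin 4) ℝ =>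
        ∑ ξ, ∑ l, (∑ η, x.1 η ξ η l) * x.2 ξ l) := by fun_prop
    have h2 : Differentiable ℝ (fun x : (Fin 4 → Fin 4 → Fin 4 → Fin 4 → ℝ) × Matrix (Fin 4) (Fin 4) ℝ =>
        (x.2).det) := by
      simp only [Matrix.det_apply']
      apply Differentiable.fun_sum
      intro σ _
      apply Differentiable.const_mul
      intro x
      exact (HasFDerivAt.finset_prod (u := Finset.univ)
        (fun i _ => ((by fun_prop : Differentiable ℝ
          (fun y : (Fin 4 → Fin 4 → Fin 4 → Fin 4 → ℝ) × Matrix (Fin 4) (Fin 4) ℝ =>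
            y.2 (σ i) i)) x).hasFDerivAt)).differentiableAt
    exact (h1 _).mul (((h2 _).neg).rpow_const (Or.inl (by simpa using hdne)))
  have hRtval : Rt (Riem, G) = S0 * sq := by rw [hRt]
  -- derivative in a pure-Riemann direction
  have hf1 : ∀ D : Fin 4 → Fin 4 → Fin 4 → Fin 4 → ℝ,
      fderiv ℝ Rt (Riem, G) (D, (0 : Matrix (Fin 4) (Fin 4) ℝ))
        = (∑ ξ, ∑ l, (∑ η, D η ξ η l) * G ξ l) * sq := by
    intro D
    apply fderiv_dir _ _ _ _ hdiff
    have hfun : (fun t : ℝ => Rt ((Riem, G) + t • (D, (0 : Matrix (Fin 4) (Fin 4) ℝ))))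
        = fun t : ℝ => S0 * sq + ((∑ ξ, ∑ l, (∑ η, D η ξ η l) * G ξ l) * sq) * t := by
      funext t
      rw [hRt]
      simp only [Prod.smul_mk, Prod.mk_add_mk, smul_zero, add_zero, Pi.add_apply,
        Pi.smul_apply, smul_eq_mul]
      simp only [add_mul, mul_assoc, Finset.sum_add_distrib, ← Finset.mul_sum]
      rw [← hS0, ← hsq]
      ring
    rw [hfun]
    simpa using ((hasDerivAt_id (0:ℝ)).const_mul
      ((∑ ξ, ∑ l, (∑ η, D η ξ η l) * G ξ l) * sq)).const_add (S0 * sq)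
  -- derivative in a pure-metric direction
  have hf2 : ∀ a b : Fin 4,
      fderiv ℝ Rt (Riem, G)
        ((0 : Fin 4 → Fin 4 → Fin 4 → Fin 4 → ℝ), Matrix.single a b 1)
      = (∑ η, Riem η a η b) * sq + S0 * ((1/2) * G.adjugate b a * sq3) := by
    intro a b
    apply fderiv_dir _ _ _ _ hdiff
    have hfun : (fun t : ℝ => Rt ((Riem, G) + t •
          ((0 : Fin 4 → Fin 4 → Fin 4 → Fin 4 → ℝ), Matrix.single a b 1)))
        = fun t : ℝ => (S0 + (∑ η, Riem η a η b) * t)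
            * (-(G.det + t * G.adjugate b a)) ^ (-(1/2) : ℝ) := by
      funext t
      rw [hRt]
      simp only [Prod.smul_mk, Prod.mk_add_mk, smul_zero, add_zero]
      rw [det_add_smul_std]
      congr 1
      have hentry : ∀ ξ l : Fin 4,
          ((G + t • Matrix.single a b 1 : Matrix (Fin 4) (Fin 4) ℝ)) ξ l
          = G ξ l + t * (if a = ξ ∧ b = l then 1 else 0) := by
        intro ξ l
        by_cases h1 : a = ξ <;> by_cases h2 : b = l <;>
          simp [Matrix.single, Matrix.add_apply, Matrix.smul_apply, h1, h2]
      simp only [hentry, mul_add, Finset.sum_add_distrib]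
      rw [← hS0]
      congr 1
      have h4 : ∀ ξ l : Fin 4,
          (∑ η, Riem η ξ η l) * (t * (if a = ξ ∧ b = l then (1:ℝ) else 0))
          = if b = l then (if a = ξ then (∑ η, Riem η ξ η l) * t else 0) else 0 := by
        intro ξ l
        by_cases h1 : a = ξ <;> by_cases h2 : b = l <;> simp [h1, h2, mul_comm]
      simp only [h4, Finset.sum_ite_eq, Finset.mem_univ, if_true]
    rw [hfun]
    have hin : HasDerivAt (fun t : ℝ => -(G.det + t * G.adjugate b a))
        (-(G.adjugate b a)) 0 := by
      exact ((((hasDerivAt_id (0:ℝ)).mul_const (G.adjugate b a)).const_add G.det).neg).congr_deriv (by simp)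
    have hw := hin.rpow_const (p := (-(1/2) : ℝ)) (Or.inl (by simpa using hdne))
    have hu : HasDerivAt (fun t : ℝ => S0 + (∑ η, Riem η a η b) * t)
        (∑ η, Riem η a η b) 0 := by
      simpa using ((hasDerivAt_id (0:ℝ)).const_mul (∑ η, Riem η a η b)).const_add S0
    have hprod := hu.mul hw
    refine hprod.congr_deriv ?_
    rw [hsq, hsq3]
    simp only [mul_zero, add_zero]
    ring
  simp only [hf1, hf2, csum (g := G), hRtval]
  have hθ1 : (∑ x : Fin 4, ∑ x1 : Fin 4, ∑ x2 : Fin 4,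
        (if x = μ then G x1 x2 else 0) * sq * Riem x x1 ν x2)
      = ∑ x1 : Fin 4, ∑ x2 : Fin 4, G x1 x2 * sq * Riem μ x1 ν x2 := by
    rw [Finset.sum_eq_single μ]
    · simp
    · intro b _ hb; simp [hb]
    · simp
  have hθ2 : (∑ x : Fin 4, ∑ x1 : Fin 4, ∑ x2 : Fin 4,
        (if x = x2 then G x1 μ else 0) * sq * Riem x x1 x2 ν)
      = ∑ x : Fin 4, ∑ x1 : Fin 4, G x1 μ * sq * Riem x x1 x ν := by
    apply Finset.sum_congr rfl; intro x _
    apply Finset.sum_congr rfl; intro x1 _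
    rw [Finset.sum_eq_single x]
    · simp
    · intro b _ hb; rw [if_neg (Ne.symm hb)]; simp
    · simp
  rw [hθ1, hθ2]
  have hFact1 : (∑ x : Fin 4, ((∑ η, Riem η ν η x) * sq
        + S0 * (1/2 * G.adjugate x ν * sq3)) * G μ x)
      = (∑ x : Fin 4, (∑ η, Riem η ν η x) * G μ x) * sq
        + S0 * (1/2) * sq3 * (∑ x : Fin 4, G.adjugate x ν * G μ x) := by
    rw [Finset.sum_mul, Finset.mul_sum, ← Finset.sum_add_distrib]
    apply Finset.sum_congr rfl; intros; ring
  have hFact2 : (∑ x : Fin 4, ((∑ η, Riem η x η ν) * sq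
        + S0 * (1/2 * G.adjugate ν x * sq3)) * G x μ)
      = (∑ x : Fin 4, (∑ η, Riem η x η ν) * G x μ) * sq
        + S0 * (1/2) * sq3 * (∑ x : Fin 4, G.adjugate ν x * G x μ) := by
    rw [Finset.sum_mul, Finset.mul_sum, ← Finset.sum_add_distrib]
    apply Finset.sum_congr rfl; intros; ring
  rw [hFact1, hFact2]
  have hadj1 : (∑ x : Fin 4, G.adjugate x ν * G μ x) = if μ = ν then G.det else 0 := by
    calc (∑ x : Fin 4, G.adjugate x ν * G μ x) = ∑ x : Fin 4, G μ x * G.adjugate x ν := by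
          apply Finset.sum_congr rfl; intros; ring
      _ = (G * G.adjugate) μ ν := by rw [Matrix.mul_apply]
      _ = (G.det • (1 : Matrix (Fin 4) (Fin 4) ℝ)) μ ν := by rw [Matrix.mul_adjugate]
      _ = if μ = ν then G.det else 0 := by
          simp [Matrix.smul_apply, Matrix.one_apply, mul_ite]
  have hadj2 : (∑ x : Fin 4, G.adjugate ν x * G x μ) = if μ = ν then G.det else 0 := by
    calc (∑ x : Fin 4, G.adjugate ν x * G x μ) = (G.adjugate * G) ν μ := by
          rw [Matrix.mul_apply]
      _ = (G.det • (1 : Matrix (Fin 4) (Fin 4) ℝ)) ν μ := by rw [Matrix.adjugate_mul]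
      _ = if μ = ν then G.det else 0 := by
          by_cases h : μ = ν
          · subst h; simp
          · have h' : ¬ ν = μ := fun hh => h hh.symm
            simp [Matrix.one_apply, h, h']
  rw [hadj1, hadj2]
  have hswap : (∑ x : Fin 4, ∑ x1 : Fin 4, G x1 μ * sq * Riem x x1 x ν)
      = (∑ x : Fin 4, (∑ η, Riem η x η ν) * G x μ) * sq := by
    rw [Finset.sum_comm, Finset.sum_mul]
    apply Finset.sum_congr rfl; intro x1 _
    rw [Finset.sum_mul, Finset.sum_mul]
    apply Finset.sum_congr rfl; intros; ring
  have hswap2 : (∑ x1 : Fin 4, ∑ x2 : Fin 4, G x1 x2 * sq * Riem μ x1 ν x2)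
      = (∑ ξ : Fin 4, ∑ l : Fin 4, Riem μ ξ ν l * G ξ l) * sq := by
    rw [Finset.sum_mul]
    apply Finset.sum_congr rfl; intro x1 _
    rw [Finset.sum_mul]
    apply Finset.sum_congr rfl; intros; ring
  rw [hswap, hswap2]
  have hpow : G.det * sq3 = -sq := by
    have h1 : (-G.det) * (-G.det) ^ ((-(1/2):ℝ) - 1)
        = (-G.det) ^ (1 + ((-(1/2):ℝ) - 1)) := by
      rw [Real.rpow_add hd, Real.rpow_one]
    have h2 : (1 + ((-(1/2):ℝ) - 1)) = (-(1/2):ℝ) := by ring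
    rw [h2] at h1
    rw [hsq, hsq3]
    linarith [h1]
  by_cases h : μ = ν
  · simp only [h, if_true]
    linear_combination S0 * hpow
  · simp only [h, if_false]
    ring
end
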